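/- Theorem 4 (closure under marginalization): Let G' be an EAMP CG over W ∪ ε and L ⊆ W, and let [G']_L be the EAMP CG obtained by marginalizing out the nodes of L (for each B ∈ L in turn: add A → C for every pair A → B, B → C, then delete B and its incident edges). Then for all disjoint X, Y, Z ⊆ W \ L: X ⊥_{G'} Y | Z (AMP separation with deterministic nodes) holds if and only if X ⊥_{[G']_L} Y | Z holds. That is, [I_{AMP}(G')]_{L ∪ ε} = [I_{AMP}([G']_L)]_ε. -/

import Mathlib

/- Mixed graphs with directed and undirected edges. -/
structure MixedGraph (γ : Type*) where
  dir : γ → γ → Prop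
  undir : γ → γ → Prop
  undir_symm : ∀ a b, undir a b → undir b a

namespace MixedGraph

variable {β : Type*} (G : MixedGraph β)

/-- Two nodes are adjacent if joined by some edge. -/
def adj (a b : β) : Prop := G.dir a b ∨ G.dir b a ∨ G.undir a b

/-- The graph is simple: no loops and at most one edge between any pair. -/
def Simple : Prop :=
  (∀ a, ¬ G.dir a a) ∧ (∀ a, ¬ G.undir a a) ∧
  (∀ a b, G.dir a b → ¬ G.dir b a) ∧ (∀ a b, G.dir a b → ¬ G.undir a b)

/-- A semidirected cycle: a cycle whose first edge is directed and whose other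
edges are directed or undirected (all pointing forwards). -/
def HasSemidirectedCycle : Prop :=
  ∃ (n : ℕ) (f : Fin (n + 2) → β),
    f 0 = f (Fin.last (n + 1)) ∧ G.dir (f 0) (f 1) ∧
    ∀ i : Fin (n + 1), G.dir (f i.castSucc) (f i.succ) ∨ G.undir (f i.castSucc) (f i.succ)

/-- A chain graph: a simple graph with no semidirected cycle. -/
def IsChainGraph : Prop := G.Simple ∧ ¬ G.HasSemidirectedCycle

/-- A DAG: a chain graph with no undirected edges. -/
def IsDAG : Prop := G.IsChainGraph ∧ ∀ a b, ¬ G.undir a b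

/-- Parents of a set of nodes. -/
def pa (X : Set β) : Set β := {v | v ∉ X ∧ ∃ x ∈ X, G.dir v x}

/-- Strict ascendants of a set of nodes (strictly descending route to the set). -/
def san (W : Set β) : Set β := {v | v ∉ W ∧ ∃ w ∈ W, Relation.TransGen G.dir v w}

/-- B is a triplex node between A and C: A → B ← C, A → B − C, or A − B ← C. -/
def triplex (A B C : β) : Prop :=
  (G.dir A B ∧ G.dir C B) ∨ (G.dir A B ∧ G.undir B C) ∨ (G.undir A B ∧ G.dir C B)

/-- B is a non-triplex node between A and C. -/
def nontriplex (A B C : β) : Prop :=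
  G.adj A B ∧ G.adj B C ∧ ¬ G.triplex A B C

/-- A route: a nonempty sequence of consecutively adjacent nodes. -/
def IsRoute (l : List β) : Prop := l ≠ [] ∧ l.Chain' G.adj

/-- A path that is open given the determined set `D` (AMP path-based semantics). -/
def AMPOpenPath (D : Set β) (l : List β) : Prop :=
  G.IsRoute l ∧ l.Nodup ∧
  (∀ A B C, [A, B, C] <:+: l → G.triplex A B C → B ∈ D ∪ G.san D) ∧
  (∀ A B C, [A, B, C] <:+: l → G.nontriplex A B C → B ∈ D →
    (G.undir A B ∧ G.undir B C ∧ ∃ p ∈ G.pa {B}, p ∉ D))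

/-- A route that is open given the determined set `D` (AMP route-based semantics). -/
def AMPOpenRoute (D : Set β) (l : List β) : Prop :=
  G.IsRoute l ∧
  (∀ A B C, [A, B, C] <:+: l → G.triplex A B C → B ∈ D) ∧
  (∀ A B C, [A, B, C] <:+: l → G.nontriplex A B C → B ∉ D)

/-- AMP separation (path-based) of X and Y given determined set D. -/
def AMPSep (D X Y : Set β) : Prop :=
  ∀ (l : List β) (x y : β), x ∈ X → y ∈ Y → l.head? = some x → l.getLast? = some y →
    ¬ G.AMPOpenPath D l

/-- AMP separation (route-based) of X and Y given determined set D. -/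
def AMPSepRoute (D X Y : Set β) : Prop :=
  ∀ (l : List β) (x y : β), x ∈ X → y ∈ Y → l.head? = some x → l.getLast? = some y →
    ¬ G.AMPOpenRoute D l

/-- `s` is a collider section of the route `l`: a maximal undirected subroute of `l`
entered by arrowheads at both ends. -/
def IsColliderSection (l s : List β) : Prop :=
  s ≠ [] ∧ List.Chain' G.undir s ∧
  ∃ pre post A C, l = pre ++ s ++ post ∧
    pre.getLast? = some A ∧ post.head? = some C ∧
    (∀ b, s.head? = some b → G.dir A b) ∧ (∀ b, s.getLast? = some b → G.dir C b) ∧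
    (∀ a b, pre.getLast? = some a → s.head? = some b → ¬ G.undir a b) ∧
    (∀ a b, s.getLast? = some a → post.head? = some b → ¬ G.undir a b)

/-- `s` is a non-collider section of the route `l`: a maximal undirected subroute of `l`
not entered by arrowheads at both ends. -/
def IsNonColliderSection (l s : List β) : Prop :=
  s ≠ [] ∧ List.Chain' G.undir s ∧
  ∃ pre post, l = pre ++ s ++ post ∧
    (∀ a b, pre.getLast? = some a → s.head? = some b → ¬ G.undir a b) ∧
    (∀ a b, s.getLast? = some a → post.head? = some b → ¬ G.undir a b) ∧
    ¬ ((∃ A, pre.getLast? = some A ∧ ∀ b, s.head? = some b → G.dir A b) ∧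
       (∃ C, post.head? = some C ∧ ∀ b, s.getLast? = some b → G.dir C b))

/-- A route that is open given the determined set `D` (LWF semantics). -/
def LWFOpenRoute (D : Set β) (l : List β) : Prop :=
  G.IsRoute l ∧
  (∀ s, G.IsColliderSection l s → ∃ x ∈ s, x ∈ D) ∧
  (∀ s, G.IsNonColliderSection l s → ∀ x ∈ s, x ∉ D)

/-- LWF separation of X and Y given determined set D. -/
def LWFSep (D X Y : Set β) : Prop :=
  ∀ (l : List β) (x y : β), x ∈ X → y ∈ Y → l.head? = some x → l.getLast? = some y →
    ¬ G.LWFOpenRoute D l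

/-- Closure of Z under a set `det` of deterministic relationships: `(S, a) ∈ det`
means that `a` is a function of `S`. -/
inductive Determined (det : Set (Set β × β)) (Z : Set β) : β → Prop
  | base : ∀ a, a ∈ Z → Determined det Z a
  | step : ∀ (S : Set β) (a : β), (S, a) ∈ det → (∀ b ∈ S, Determined det Z b) →
      Determined det Z a

/-- The set D(Z) of nodes determined by Z. -/
def DSet (det : Set (Set β × β)) (Z : Set β) : Set β := {a | Determined det Z a}

end MixedGraph

section EAMP

variable {α : Type*}

/-- Directed edges of the EAMP CG: `inl` nodes are the original nodes,
`inr` nodes are the error nodes. -/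
def eampDir (G : MixedGraph α) : (α ⊕ α) → (α ⊕ α) → Prop
  | Sum.inl x, Sum.inl y => G.dir x y
  | Sum.inr x, Sum.inl y => x = y
  | _, _ => False

/-- Undirected edges of the EAMP CG: `ε^A − ε^B` for each `A − B` of G. -/
def eampUndir (G : MixedGraph α) : (α ⊕ α) → (α ⊕ α) → Prop
  | Sum.inr x, Sum.inr y => G.undir x y
  | _, _ => False

/-- The EAMP CG G' of an AMP CG G: add `ε^A → A` for each node A and replace
each undirected edge `A − B` by `ε^A − ε^B`. -/
def eamp (G : MixedGraph α) : MixedGraph (α ⊕ α) where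
  dir := eampDir G
  undir := eampUndir G
  undir_symm := by
    rintro (x | x) (y | y) h <;>
      simp only [eampUndir] at h ⊢ <;>
      first
        | exact h.elim
        | exact G.undir_symm _ _ h

/-- The parents of A in G, embedded as nodes of the EAMP CG. -/
def eampPa (G : MixedGraph α) (A : α) : Set (α ⊕ α) := {x | ∃ B, G.dir B A ∧ x = Sum.inl B}

/-- The deterministic relationships of the EAMP CG: each A is a function of
`pa_G(A) ∪ {ε^A}`, and each `ε^A` is a function of `pa_G(A) ∪ {A}`. -/
def eampDet (G : MixedGraph α) : Set (Set (α ⊕ α) × (α ⊕ α)) :=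
  {p | (∃ A, p = (eampPa G A ∪ {Sum.inr A}, Sum.inl A)) ∨
       (∃ A, p = (eampPa G A ∪ {Sum.inl A}, Sum.inr A))}

/-- Marginalize the node B out of G: add `A → C` for every pair `A → B`, `B → C`,
then delete B together with all edges it participates in. -/
def marg {β : Type*} (G : MixedGraph β) (B : β) : MixedGraph β where
  dir a c := a ≠ B ∧ c ≠ B ∧ (G.dir a c ∨ (G.dir a B ∧ G.dir B c))
  undir a c := a ≠ B ∧ c ≠ B ∧ G.undir a c
  undir_symm := by
    rintro a c ⟨h1, h2, h3⟩
    exact ⟨h2, h1, G.undir_symm _ _ h3⟩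

/-- Marginalize a list of nodes out of G, one at a time. -/
def margList {β : Type*} (G : MixedGraph β) (L : List β) : MixedGraph β := L.foldl marg G

/-- Directed edges of the DAG G'': those of G' among `V ∪ ε`, plus
`ε^A → S_{ε^Aε^B} ← ε^B` for each undirected edge `ε^A − ε^B` of G'. -/
def dagDir (G : MixedGraph α) : ((α ⊕ α) ⊕ Sym2 α) → ((α ⊕ α) ⊕ Sym2 α) → Prop
  | Sum.inl x, Sum.inl y => (eamp G).dir x y
  | Sum.inl (Sum.inr x), Sum.inr s => ∃ y, G.undir x y ∧ s = s(x, y)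
  | _, _ => False

/-- The DAG G'' obtained from G' by replacing each `ε^A − ε^B` with
`ε^A → S_{ε^Aε^B} ← ε^B`, where the selection nodes are fresh. -/
def dagOf (G : MixedGraph α) : MixedGraph ((α ⊕ α) ⊕ Sym2 α) where
  dir := dagDir G
  undir _ _ := False
  undir_symm := by intro a b h; exact h.elim

/-- The set S of selection nodes of G''. -/
def selNodes (G : MixedGraph α) : Set ((α ⊕ α) ⊕ Sym2 α) :=
  {v | ∃ x y, G.undir x y ∧ v = Sum.inr s(x, y)}

/-- The deterministic relationships of G'' (the same as those of G'). -/
def dagDet (G : MixedGraph α) : Set (Set ((α ⊕ α) ⊕ Sym2 α) × ((α ⊕ α) ⊕ Sym2 α)) :=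
  {p | ∃ q ∈ eampDet G, p = (Sum.inl '' q.1, Sum.inl q.2)}

/-- Structural characterization of EAMP CGs over `W ∪ ε`: a chain graph whose
undirected edges join only error nodes and whose error nodes have no incoming
directed edges. -/
def IsEAMPStruct (G : MixedGraph (α ⊕ α)) : Prop :=
  G.IsChainGraph ∧
  (∀ a b, G.undir a b → (∃ x, a = Sum.inr x) ∧ ∃ y, b = Sum.inr y) ∧
  (∀ a x, ¬ G.dir a (Sum.inr x))

/-- K is a connectivity component: a maximal set connected by undirected paths. -/
def IsConnComp {β : Type*} (G : MixedGraph β) (K : Set β) : Prop :=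
  ∃ a, K = {b | Relation.ReflTransGen G.undir a b}

end EAMP

section ProofAux
open Sum

variable {β : Type*}

lemma chain'_nil' {γ : Type*} {R : γ → γ → Prop} : List.Chain' R [] := List.IsChain.nil

lemma chain'_singleton' {γ : Type*} {R : γ → γ → Prop} (a : γ) : List.Chain' R [a] :=
  List.IsChain.singleton a

lemma chain'_cons' {γ : Type*} {R : γ → γ → Prop} {a b : γ} {l : List γ} :
    List.Chain' R (a :: b :: l) ↔ R a b ∧ List.Chain' R (b :: l) := List.isChain_cons_cons

/-- Recursive characterization of AMP-open routes. -/
def oChain (H : MixedGraph β) (D : Set β) : List β → Prop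
  | a :: b :: rest =>
      H.adj a b ∧ (∀ c, rest.head? = some c → (b ∈ D ↔ H.triplex a b c)) ∧
      oChain H D (b :: rest)
  | _ => True

@[simp] lemma oChain_nil (H : MixedGraph β) (D : Set β) : oChain H D [] := trivial

@[simp] lemma oChain_single (H : MixedGraph β) (D : Set β) (a : β) : oChain H D [a] := trivial

lemma oChain_cons_cons (H : MixedGraph β) (D : Set β) (a b : β) (rest : List β) :
    oChain H D (a :: b :: rest) ↔
      H.adj a b ∧ (∀ c, rest.head? = some c → (b ∈ D ↔ H.triplex a b c)) ∧
      oChain H D (b :: rest) := by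
  rw [oChain]

lemma oChain_chain' (H : MixedGraph β) (D : Set β) :
    ∀ l, oChain H D l → l.Chain' H.adj
  | [] , _ => chain'_nil'
  | [a], _ => chain'_singleton' a
  | a :: b :: rest, h => by
    rw [oChain_cons_cons] at h
    exact chain'_cons'.mpr ⟨h.1, oChain_chain' H D (b :: rest) h.2.2⟩

lemma triple_infix_cons {A B C a : β} {l : List β} :
    [A, B, C] <:+: a :: l ↔ (A = a ∧ ∃ t, l = B :: C :: t) ∨ [A, B, C] <:+: l := by
  rw [List.infix_cons_iff]
  constructor
  · rintro (h | h)
    · rcases h with ⟨t, ht⟩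
      simp only [List.cons_append] at ht
      cases ht
      exact Or.inl ⟨rfl, _, rfl⟩
    · exact Or.inr h
  · rintro (⟨rfl, t, rfl⟩ | h)
    · exact Or.inl ⟨t, rfl⟩
    · exact Or.inr h

lemma oChain_iff_infix (H : MixedGraph β) (D : Set β) :
    ∀ l : List β, (l.Chain' H.adj ∧
      ∀ A B C, [A, B, C] <:+: l → (B ∈ D ↔ H.triplex A B C)) ↔ oChain H D l
  | [] => by
    simp only [oChain_nil, iff_true, chain'_nil', true_and]
    intro A B C h
    have := h.length_le; simp at this
  | [a] => by
    simp only [oChain_single, iff_true, chain'_singleton', true_and]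
    intro A B C h
    have := h.length_le; simp at this
  | a :: b :: rest => by
    rw [oChain_cons_cons, ← oChain_iff_infix H D (b :: rest), chain'_cons']
    constructor
    · rintro ⟨⟨hab, hch⟩, htr⟩
      refine ⟨hab, ?_, hch, ?_⟩
      · intro c hc
        cases rest with
        | nil => simp at hc
        | cons c' t =>
          simp only [List.head?_cons, Option.some.injEq] at hc
          subst hc
          exact htr a b _ (triple_infix_cons.mpr (Or.inl ⟨rfl, t, rfl⟩))
      · intro A B C h
        exact htr A B C (triple_infix_cons.mpr (Or.inr h))
    · rintro ⟨hab, hd, hch, htr⟩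
      refine ⟨⟨hab, hch⟩, ?_⟩
      intro A B C h
      rcases triple_infix_cons.mp h with ⟨rfl, t, ht⟩ | h
      · injection ht with h1 h2
        subst h1
        exact hd C (by rw [h2]; rfl)
      · exact htr A B C h

lemma openRoute_iff_oChain (H : MixedGraph β) (D : Set β) (l : List β) :
    H.AMPOpenRoute D l ↔ l ≠ [] ∧ oChain H D l := by
  constructor
  · rintro ⟨⟨hne, hch⟩, h1, h2⟩
    refine ⟨hne, (oChain_iff_infix H D l).mp ⟨hch, ?_⟩⟩
    intro A B C h
    have hsub : List.Chain' H.adj [A, B, C] := hch.infix h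
    rw [chain'_cons', chain'_cons'] at hsub
    obtain ⟨hAB, hBC, -⟩ := hsub
    constructor
    · intro hB
      by_contra ht
      exact h2 A B C h ⟨hAB, hBC, ht⟩ hB
    · exact h1 A B C h
  · rintro ⟨hne, hoc⟩
    obtain ⟨hch, htr⟩ := (oChain_iff_infix H D l).mpr hoc
    refine ⟨⟨hne, hch⟩, ?_, ?_⟩
    · intro A B C h ht; exact (htr A B C h).mpr ht
    · intro A B C h hnt hB; exact hnt.2.2 ((htr A B C h).mp hB)

lemma AMPSepRoute_iff (H : MixedGraph β) (D X Y : Set β) :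
    H.AMPSepRoute D X Y ↔
      ∀ (l : List β) (x y : β), x ∈ X → y ∈ Y → l.head? = some x →
        l.getLast? = some y → ¬ oChain H D l := by
  unfold MixedGraph.AMPSepRoute
  refine forall_congr' fun l => ?_
  refine forall_congr' fun x => ?_
  refine forall_congr' fun y => ?_
  refine forall_congr' fun hx => forall_congr' fun hy => forall_congr' fun hh =>
    forall_congr' fun hl => ?_
  rw [openRoute_iff_oChain]
  have hne : l ≠ [] := by rintro rfl; simp at hh
  simp [hne]

section Alpha
variable {α : Type*}

/-- Structural invariant maintained by marginalization of `inl` nodes. -/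
def Inv0 (H : MixedGraph (α ⊕ α)) : Prop :=
  (∀ u v, H.undir u v → (∃ x, u = Sum.inr x) ∧ (∃ y, v = Sum.inr y)) ∧
  (∀ u x, ¬ H.dir u (Sum.inr x)) ∧
  (∀ u, ¬ Relation.TransGen H.dir u u) ∧
  (∀ a : α, H.dir (Sum.inr a) (Sum.inl a) ∨ ∀ u, ¬ H.adj u (Sum.inl a))

/-- The union of a graph with its marginalization. -/
def Kg (H : MixedGraph (α ⊕ α)) (B : α ⊕ α) : MixedGraph (α ⊕ α) :=
  ⟨fun u v => H.dir u v ∨ (marg H B).dir u v, H.undir, H.undir_symm⟩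

variable {H : MixedGraph (α ⊕ α)} {b : α}

lemma Kdir_iff {B u v : α ⊕ α} :
    (Kg H B).dir u v ↔ H.dir u v ∨ (u ≠ B ∧ v ≠ B ∧ H.dir u B ∧ H.dir B v) := by
  show H.dir u v ∨ (u ≠ B ∧ v ≠ B ∧ (H.dir u v ∨ (H.dir u B ∧ H.dir B v))) ↔ _
  tauto

@[simp] lemma Kundir_iff {B u v : α ⊕ α} : (Kg H B).undir u v ↔ H.undir u v := Iff.rfl

lemma margDir_iff {B u v : α ⊕ α} :
    (marg H B).dir u v ↔ u ≠ B ∧ v ≠ B ∧ (H.dir u v ∨ (H.dir u B ∧ H.dir B v)) := Iff.rfl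

lemma margUndir_iff {B u v : α ⊕ α} :
    (marg H B).undir u v ↔ u ≠ B ∧ v ≠ B ∧ H.undir u v := Iff.rfl

namespace Inv0
variable (hI : Inv0 H)
include hI

lemma no_self {u : α ⊕ α} : ¬ H.dir u u := fun h => hI.2.2.1 u (.single h)

lemma no2 {u v : α ⊕ α} (h : H.dir u v) : ¬ H.dir v u :=
  fun h' => hI.2.2.1 u ((Relation.TransGen.single h).tail h')

lemma no3 {u v w : α ⊕ α} (h : H.dir u v) (h' : H.dir v w) : ¬ H.dir w u :=
  fun h'' => hI.2.2.1 u (((Relation.TransGen.single h).tail h').tail h'')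

lemma noInr {u : α ⊕ α} {x : α} : ¬ H.dir u (Sum.inr x) := hI.2.1 u x

lemma no_undir_inl_right {u : α ⊕ α} {x : α} : ¬ H.undir u (Sum.inl x) := by
  intro h
  obtain ⟨-, y, hy⟩ := hI.1 u _ h
  simp at hy

lemma no_undir_inl_left {u : α ⊕ α} {x : α} : ¬ H.undir (Sum.inl x) u := by
  intro h
  obtain ⟨⟨y, hy⟩, -⟩ := hI.1 _ u h
  simp at hy

lemma undir_no_dir_right {u v w : α ⊕ α} (h : H.undir u v) : ¬ H.dir w v := by
  obtain ⟨-, y, rfl⟩ := hI.1 u v h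
  exact hI.noInr

lemma undir_no_dir_left {u v w : α ⊕ α} (h : H.undir u v) : ¬ H.dir w u := by
  obtain ⟨⟨y, rfl⟩, -⟩ := hI.1 u v h
  exact hI.noInr

lemma Kno2 {u v : α ⊕ α} (h : (Kg H (Sum.inl b)).dir u v) : ¬ (Kg H (Sum.inl b)).dir v u := by
  rw [Kdir_iff] at h ⊢
  rcases h with h | ⟨-, -, h1, h2⟩
  · rintro (h' | ⟨-, -, h1', h2'⟩)
    · exact hI.no2 h h'
    · exact hI.no3 h h1' h2'
  · rintro (h' | ⟨-, -, h1', h2'⟩)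
    · exact hI.no3 h1 h2 h'
    · exact hI.no2 h2 h1'

lemma Kdir_toB {u : α ⊕ α} : (Kg H (Sum.inl b)).dir u (Sum.inl b) ↔ H.dir u (Sum.inl b) := by
  rw [Kdir_iff]
  constructor
  · rintro (h | ⟨-, h, -⟩)
    · exact h
    · exact absurd rfl h
  · exact Or.inl

lemma Kdir_fromB {v : α ⊕ α} : (Kg H (Sum.inl b)).dir (Sum.inl b) v ↔ H.dir (Sum.inl b) v := by
  rw [Kdir_iff]
  constructor
  · rintro (h | ⟨h, -⟩)
    · exact h
    · exact absurd rfl h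
  · exact Or.inl

lemma Kundir_no_dir_right {u v w : α ⊕ α} (h : (Kg H (Sum.inl b)).undir u v) :
    ¬ (Kg H (Sum.inl b)).dir w v := by
  rw [Kundir_iff] at h
  obtain ⟨-, y, rfl⟩ := hI.1 u v h
  rw [Kdir_iff]
  rintro (h' | ⟨-, -, -, h'⟩) <;> exact hI.noInr h'

lemma Kundir_no_dir_left {u v w : α ⊕ α} (h : (Kg H (Sum.inl b)).undir u v) :
    ¬ (Kg H (Sum.inl b)).dir w u :=
  hI.Kundir_no_dir_right (H.undir_symm _ _ h)

end Inv0

lemma triplex_congrA (G : MixedGraph (α ⊕ α)) {A A' M C : α ⊕ α}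
    (h1 : G.dir A M ↔ G.dir A' M) (h2 : G.undir A M ↔ G.undir A' M) :
    G.triplex A M C ↔ G.triplex A' M C := by
  unfold MixedGraph.triplex; rw [h1, h2]

lemma triplex_congrC (G : MixedGraph (α ⊕ α)) {A M C C' : α ⊕ α}
    (h1 : G.dir C M ↔ G.dir C' M) (h2 : G.undir M C ↔ G.undir M C') :
    G.triplex A M C ↔ G.triplex A M C' := by
  unfold MixedGraph.triplex; rw [h1, h2]

section Exp
variable {α : Type*} {H : MixedGraph (α ⊕ α)} {b : α} {D : Set (α ⊕ α)}

lemma exp_lemma (hI : Inv0 H) (hBD : Sum.inl b ∉ D) :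
    ∀ l : List (α ⊕ α), oChain (Kg H (Sum.inl b)) D l →
      ∃ l', oChain (Kg H (Sum.inl b)) D l' ∧ l'.Chain' H.adj ∧
        l'.head? = l.head? ∧ l'.getLast? = l.getLast? ∧
        (∀ w, oChain (Kg H (Sum.inl b)) D (w :: l) →
          oChain (Kg H (Sum.inl b)) D (w :: l')) := by
  set B : α ⊕ α := Sum.inl b with hB
  set K : MixedGraph (α ⊕ α) := Kg H B with hK
  intro l
  induction l with
  | nil => exact fun _ => ⟨[], by simp, chain'_nil', rfl, rfl, fun w h => h⟩
  | cons u tl ih =>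
    cases tl with
    | nil => exact fun _ => ⟨[u], by simp, chain'_singleton' u, rfl, rfl, fun w h => h⟩
    | cons v rest =>
      intro hoc
      rw [oChain_cons_cons] at hoc
      obtain ⟨hadj, htr, hrest⟩ := hoc
      obtain ⟨l'', hoc'', hch'', hh'', hl'', hw''⟩ := ih hrest
      obtain ⟨t, rfl⟩ : ∃ t, l'' = v :: t := by
        cases l'' with
        | nil => simp at hh''
        | cons v' t =>
          rw [List.head?_cons, List.head?_cons, Option.some.injEq] at hh''
          exact ⟨t, by rw [hh'']⟩
      by_cases hH : H.adj u v
      · -- keep the edge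
        have hnew : oChain K D (u :: v :: t) := by
          have : oChain K D (u :: v :: rest) := by
            rw [oChain_cons_cons]; exact ⟨hadj, htr, hrest⟩
          exact hw'' u this
        refine ⟨u :: v :: t, hnew, chain'_cons'.mpr ⟨hH, hch''⟩, rfl, ?_, ?_⟩
        · rw [List.getLast?_cons_cons, List.getLast?_cons_cons]; exact hl''
        · intro w hw
          rw [oChain_cons_cons] at hw ⊢
          refine ⟨hw.1, ?_, hnew⟩
          intro c hc
          rw [List.head?_cons, Option.some.injEq] at hc
          subst hc
          exact hw.2.1 v rfl
      · -- the edge is a composite edge of the marginal graph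
        simp only [MixedGraph.adj] at hadj
        have hFor : (H.dir u B ∧ H.dir B v) ∨ (H.dir v B ∧ H.dir B u) := by
          rcases hadj with h | h | h
          · rw [hK, Kdir_iff] at h
            rcases h with h | ⟨-, -, h1, h2⟩
            · exact absurd (Or.inl h) hH
            · exact Or.inl ⟨h1, h2⟩
          · rw [hK, Kdir_iff] at h
            rcases h with h | ⟨-, -, h1, h2⟩
            · exact absurd (Or.inr (Or.inl h)) hH
            · exact Or.inr ⟨h1, h2⟩
          · exact absurd (Or.inr (Or.inr h)) hH
        -- facts valid in both subcases
        have hUuB : ¬ K.undir u B := fun h => hI.no_undir_inl_right h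
        have hUBv : ¬ K.undir B v := fun h => hI.no_undir_inl_left h
        rcases hFor with ⟨h1, h2⟩ | ⟨h1, h2⟩
        · -- u → B → v
          have hKuv : K.dir u v := by
            rw [hK, Kdir_iff]
            right
            refine ⟨?_, ?_, h1, h2⟩
            · rintro rfl; exact hI.no_self h1
            · rintro rfl; exact hI.no_self h2
          have hKvB : ¬ K.dir v B := fun h => hI.no2 h2 (hI.Kdir_toB.mp h)
          have hKBu : ¬ K.dir B u := fun h => hI.no2 h1 (hI.Kdir_fromB.mp h)
          have hKvu : ¬ K.dir v u := hI.Kno2 hKuv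
          have hUuv : ¬ K.undir u v := fun h => hI.undir_no_dir_right h h2
          have hBv : oChain K D (B :: v :: t) := by
            refine hw'' B ?_
            rw [oChain_cons_cons]
            refine ⟨Or.inl (hI.Kdir_fromB.mpr h2), ?_, hrest⟩
            intro c hc
            rw [← triplex_congrA K (iff_of_true hKuv (hI.Kdir_fromB.mpr h2))
              (iff_of_false hUuv hUBv)]
            exact htr c hc
          have hnew : oChain K D (u :: B :: v :: t) := by
            rw [oChain_cons_cons]
            refine ⟨Or.inl (hI.Kdir_toB.mpr h1), ?_, hBv⟩
            intro c hc
            rw [List.head?_cons, Option.some.injEq] at hc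
            subst hc
            refine iff_of_false hBD ?_
            rintro (⟨-, h⟩ | ⟨-, h⟩ | ⟨h, -⟩)
            · exact hKvB h
            · exact hUBv h
            · exact hUuB h
          refine ⟨u :: B :: v :: t, hnew, ?_, rfl, ?_, ?_⟩
          · exact chain'_cons'.mpr ⟨Or.inl h1,
              chain'_cons'.mpr ⟨Or.inl h2, hch''⟩⟩
          · rw [List.getLast?_cons_cons, List.getLast?_cons_cons,
              List.getLast?_cons_cons]
            exact hl''
          · intro w hw
            rw [oChain_cons_cons] at hw ⊢
            refine ⟨hw.1, ?_, hnew⟩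
            intro c hc
            rw [List.head?_cons, Option.some.injEq] at hc
            subst hc
            rw [triplex_congrC K (iff_of_false hKBu hKvu)
              (iff_of_false hUuB hUuv)]
            exact hw.2.1 v rfl
        · -- v → B → u
          have hKvu : K.dir v u := by
            rw [hK, Kdir_iff]
            right
            refine ⟨?_, ?_, h1, h2⟩
            · rintro rfl; exact hI.no_self h1
            · rintro rfl; exact hI.no_self h2
          have hKuB : ¬ K.dir u B := fun h => hI.no2 h2 (hI.Kdir_toB.mp h)
          have hKBv : ¬ K.dir B v := fun h => hI.no2 h1 (hI.Kdir_fromB.mp h)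
          have hKuv : ¬ K.dir u v := fun h => hI.Kno2 h hKvu
          have hUuv : ¬ K.undir u v := fun h => hI.undir_no_dir_left h h2
          have hBv : oChain K D (B :: v :: t) := by
            refine hw'' B ?_
            rw [oChain_cons_cons]
            refine ⟨Or.inr (Or.inl (hI.Kdir_toB.mpr h1)), ?_, hrest⟩
            intro c hc
            rw [← triplex_congrA K (iff_of_false hKuv hKBv)
              (iff_of_false hUuv hUBv)]
            exact htr c hc
          have hnew : oChain K D (u :: B :: v :: t) := by
            rw [oChain_cons_cons]
            refine ⟨Or.inr (Or.inl (hI.Kdir_fromB.mpr h2)), ?_, hBv⟩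
            intro c hc
            rw [List.head?_cons, Option.some.injEq] at hc
            subst hc
            refine iff_of_false hBD ?_
            rintro (⟨h, -⟩ | ⟨h, -⟩ | ⟨h, -⟩)
            · exact hKuB h
            · exact hKuB h
            · exact hUuB h
          refine ⟨u :: B :: v :: t, hnew, ?_, rfl, ?_, ?_⟩
          · exact chain'_cons'.mpr ⟨Or.inr (Or.inl h2),
              chain'_cons'.mpr ⟨Or.inr (Or.inl h1), hch''⟩⟩
          · rw [List.getLast?_cons_cons, List.getLast?_cons_cons,
              List.getLast?_cons_cons]
            exact hl''
          · intro w hw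
            rw [oChain_cons_cons] at hw ⊢
            refine ⟨hw.1, ?_, hnew⟩
            intro c hc
            rw [List.head?_cons, Option.some.injEq] at hc
            subst hc
            rw [triplex_congrC K (iff_of_true (hI.Kdir_fromB.mpr h2) hKvu)
              (iff_of_false hUuB hUuv)]
            exact hw.2.1 v rfl

end Exp

section Elim
variable {α : Type*}

open Classical in
/-- Number of occurrences of `B`. -/
noncomputable def cntB (B : α ⊕ α) : List (α ⊕ α) → ℕ
  | [] => 0
  | a :: t => cntB B t + if a = B then 1 else 0

lemma cntB_cons_ne (B a : α ⊕ α) (t : List (α ⊕ α)) (h : a ≠ B) :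
    cntB B (a :: t) = cntB B t := by
  rw [cntB, if_neg h, Nat.add_zero]

lemma cntB_cons_self (B : α ⊕ α) (t : List (α ⊕ α)) :
    cntB B (B :: t) = cntB B t + 1 := by
  rw [cntB, if_pos rfl]

variable {H : MixedGraph (α ⊕ α)} {b : α} {D : Set (α ⊕ α)}

lemma elim_lemma (hI : Inv0 H) (hBD : Sum.inl b ∉ D) (hpD : Sum.inr b ∉ D) :
    ∀ (n : ℕ) (l : List (α ⊕ α)),
      l.length + cntB (Sum.inl b) l ≤ n → oChain (Kg H (Sum.inl b)) D l →
      l.head? ≠ some (Sum.inl b) → l.getLast? ≠ some (Sum.inl b) →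
      ∃ l', oChain (Kg H (Sum.inl b)) D l' ∧ (Sum.inl b) ∉ l' ∧
        l'.head? = l.head? ∧ l'.getLast? = l.getLast? ∧
        (∀ w, oChain (Kg H (Sum.inl b)) D (w :: l) →
          oChain (Kg H (Sum.inl b)) D (w :: l')) := by
  set B : α ⊕ α := Sum.inl b with hB
  set K : MixedGraph (α ⊕ α) := Kg H B with hK
  intro n
  induction n with
  | zero =>
    intro l hlen _ _ _
    match l with
    | [] => exact ⟨[], by simp, by simp, rfl, rfl, fun w h => h⟩
    | a :: t => simp [List.length] at hlen
  | succ m ihn =>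
    intro l hlen hoc hhd htl
    match l with
    | [] => exact ⟨[], by simp, by simp, rfl, rfl, fun w h => h⟩
    | [u] =>
      have hu : u ≠ B := fun h => hhd (by simp [h])
      exact ⟨[u], by simp, fun h => hu (List.mem_singleton.mp h).symm, rfl, rfl, fun w h => h⟩
    | u :: v :: rest =>
      have hu : u ≠ B := fun h => hhd (by simp [h])
      by_cases hvB : v = B
      · subst hvB
        match rest with
        | [] => exact absurd (by rw [List.getLast?_cons_cons]; rfl) htl
        | c :: rest' =>
          rw [oChain_cons_cons] at hoc
          obtain ⟨hadj1, htr1, hoc2⟩ := hoc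
          rw [oChain_cons_cons] at hoc2
          obtain ⟨hadj2, htr2, hoc3⟩ := hoc2
          have htri : ¬ K.triplex u B c := fun h => hBD ((htr1 c rfl).mpr h)
          -- edge types at B
          have e1 : H.dir u B ∨ H.dir B u := by
            rcases hadj1 with h | h | h
            · exact Or.inl (hI.Kdir_toB.mp h)
            · exact Or.inr (hI.Kdir_fromB.mp h)
            · exact absurd h hI.no_undir_inl_right
          have e2 : H.dir B c ∨ H.dir c B := by
            rcases hadj2 with h | h | h
            · exact Or.inl (hI.Kdir_fromB.mp h)
            · exact Or.inr (hI.Kdir_toB.mp h)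
            · exact absurd h hI.no_undir_inl_left
          have hlast : (u :: B :: c :: rest').getLast? = (c :: rest').getLast? := by
            rw [List.getLast?_cons_cons, List.getLast?_cons_cons]
          have htl' : (c :: rest').getLast? ≠ some B := by rw [← hlast]; exact htl
          -- three possible configurations
          rcases e1 with huB | hBu
          · rcases e2 with hBc | hcB
            · -- u → B → c : contract to the composite edge u → c
              have hcne : c ≠ B := fun h => hI.no_self (h ▸ hBc)
              have hKuc : K.dir u c := by
                rw [hK, Kdir_iff]; exact Or.inr ⟨hu, hcne, huB, hBc⟩
              have hKcu : ¬ K.dir c u := hI.Kno2 hKuc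
              have hKBu : ¬ K.dir B u := fun h => hI.no2 huB (hI.Kdir_fromB.mp h)
              have hUuB : ¬ K.undir u B := hI.no_undir_inl_right
              have hUuc : ¬ K.undir u c := fun h => hI.undir_no_dir_right h hBc
              have hUBc : ¬ K.undir B c := hI.no_undir_inl_left
              have hcongrA : ∀ r, K.triplex B c r ↔ K.triplex u c r :=
                fun r => triplex_congrA K
                  (iff_of_true (hI.Kdir_fromB.mpr hBc) hKuc) (iff_of_false hUBc hUuc)
              have hmid : oChain K D (u :: c :: rest') := by
                rw [oChain_cons_cons]
                refine ⟨Or.inl hKuc, ?_, hoc3⟩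
                intro r hr
                rw [← hcongrA r]
                exact htr2 r hr
              have htrans : ∀ w, oChain K D (w :: u :: B :: c :: rest') →
                  oChain K D (w :: u :: c :: rest') := by
                intro w hw
                rw [oChain_cons_cons] at hw ⊢
                refine ⟨hw.1, ?_, hmid⟩
                intro r hr
                rw [List.head?_cons, Option.some.injEq] at hr
                subst hr
                rw [triplex_congrC K (iff_of_false hKcu hKBu) (iff_of_false hUuc hUuB)]
                exact hw.2.1 B rfl
              obtain ⟨l', h1, h2, h3, h4, h5⟩ := ihn (u :: c :: rest')
                (by
                  simp only [List.length] at hlen ⊢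
                  rw [cntB_cons_ne _ _ _ hu, cntB_cons_self, cntB_cons_ne _ _ _ hcne] at hlen
                  rw [cntB_cons_ne _ _ _ hu, cntB_cons_ne _ _ _ hcne]
                  omega)
                hmid (by simpa using hu) (by
                  rw [List.getLast?_cons_cons]; exact htl')
              refine ⟨l', h1, h2, by rw [h3]; simp, ?_, fun w hw => h5 w (htrans w hw)⟩
              rw [h4, List.getLast?_cons_cons, hlast]
            · -- u → B ← c : triplex, impossible
              exact absurd (Or.inl ⟨hI.Kdir_toB.mpr huB, hI.Kdir_toB.mpr hcB⟩) htri
          · rcases e2 with hBc | hcB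
            · -- u ← B → c : reroute through the error node of b
              have hpB : H.dir (Sum.inr b) B := by
                rcases hI.2.2.2 b with h | h
                · exact h
                · exact absurd (Or.inr (Or.inl hBu)) (h u)
              have hcne : c ≠ B := fun h => hI.no_self (h ▸ hBc)
              have hpne : (Sum.inr b : α ⊕ α) ≠ B := by simp [hB]
              have hKpu : K.dir (Sum.inr b) u := by
                rw [hK, Kdir_iff]; exact Or.inr ⟨hpne, hu, hpB, hBu⟩
              have hKpc : K.dir (Sum.inr b) c := by
                rw [hK, Kdir_iff]; exact Or.inr ⟨hpne, hcne, hpB, hBc⟩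
              have huinl : ∀ x, u ≠ Sum.inr x := by
                rintro x rfl; exact hI.noInr hBu
              have hcinl : ∀ x, c ≠ Sum.inr x := by
                rintro x rfl; exact hI.noInr hBc
              have hUup : ¬ K.undir u (Sum.inr b) := by
                intro h
                obtain ⟨⟨x, hx⟩, -⟩ := hI.1 _ _ h
                exact huinl x hx
              have hUpc : ¬ K.undir (Sum.inr b) c := by
                intro h
                obtain ⟨-, x, hx⟩ := hI.1 _ _ h
                exact hcinl x hx
              have hKup : ¬ K.dir u (Sum.inr b) := by
                rw [hK, Kdir_iff]
                rintro (h | ⟨-, -, -, h⟩) <;> exact hI.noInr h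
              have hKcp : ¬ K.dir c (Sum.inr b) := by
                rw [hK, Kdir_iff]
                rintro (h | ⟨-, -, -, h⟩) <;> exact hI.noInr h
              have hKBu : K.dir B u := hI.Kdir_fromB.mpr hBu
              have hUuB : ¬ K.undir u B := hI.no_undir_inl_right
              have hUBc : ¬ K.undir B c := hI.no_undir_inl_left
              have hUuc' : ¬ K.undir (Sum.inr b) c → True := fun _ => trivial
              have hcongrA : ∀ r, K.triplex B c r ↔ K.triplex (Sum.inr b) c r :=
                fun r => triplex_congrA K
                  (iff_of_true (hI.Kdir_fromB.mpr hBc) hKpc) (iff_of_false hUBc hUpc)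
              have hmid : oChain K D (u :: Sum.inr b :: c :: rest') := by
                rw [oChain_cons_cons]
                refine ⟨Or.inr (Or.inl hKpu), ?_, ?_⟩
                · intro r hr
                  refine iff_of_false hpD ?_
                  rintro (⟨h, -⟩ | ⟨h, -⟩ | ⟨h, -⟩)
                  · exact hKup h
                  · exact hKup h
                  · exact hUup h
                · rw [oChain_cons_cons]
                  refine ⟨Or.inl hKpc, ?_, hoc3⟩
                  intro r hr
                  rw [← hcongrA r]
                  exact htr2 r hr
              have htrans : ∀ w, oChain K D (w :: u :: B :: c :: rest') →
                  oChain K D (w :: u :: Sum.inr b :: c :: rest') := by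
                intro w hw
                rw [oChain_cons_cons] at hw ⊢
                refine ⟨hw.1, ?_, hmid⟩
                intro r hr
                rw [List.head?_cons, Option.some.injEq] at hr
                subst hr
                rw [triplex_congrC K (iff_of_true hKpu hKBu) (iff_of_false hUup hUuB)]
                exact hw.2.1 B rfl
              obtain ⟨l', h1, h2, h3, h4, h5⟩ := ihn (u :: Sum.inr b :: c :: rest')
                (by
                  simp only [List.length] at hlen ⊢
                  rw [cntB_cons_ne _ _ _ hu, cntB_cons_self, cntB_cons_ne _ _ _ hcne] at hlen
                  rw [cntB_cons_ne _ _ _ hu, cntB_cons_ne _ _ _ hpne,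
                    cntB_cons_ne _ _ _ hcne]
                  omega)
                hmid (by simpa using hu) (by
                  rw [List.getLast?_cons_cons, List.getLast?_cons_cons]; exact htl')
              refine ⟨l', h1, h2, by rw [h3]; simp, ?_, fun w hw => h5 w (htrans w hw)⟩
              rw [h4, List.getLast?_cons_cons, List.getLast?_cons_cons, hlast]
            · -- u ← B ← c : contract to the composite edge c → u
              have hcne : c ≠ B := fun h => hI.no_self (h ▸ hcB)
              have hKcu : K.dir c u := by
                rw [hK, Kdir_iff]; exact Or.inr ⟨hcne, hu, hcB, hBu⟩
              have hKuc : ¬ K.dir u c := fun h => hI.Kno2 h hKcu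
              have hKBc : ¬ K.dir B c := fun h => hI.no2 hcB (hI.Kdir_fromB.mp h)
              have hKBu : K.dir B u := hI.Kdir_fromB.mpr hBu
              have hUuB : ¬ K.undir u B := hI.no_undir_inl_right
              have hUBc : ¬ K.undir B c := hI.no_undir_inl_left
              have hUuc : ¬ K.undir u c := fun h => hI.undir_no_dir_left h hBu
              have hcongrA : ∀ r, K.triplex B c r ↔ K.triplex u c r :=
                fun r => triplex_congrA K (iff_of_false hKBc hKuc)
                  (iff_of_false hUBc hUuc)
              have hmid : oChain K D (u :: c :: rest') := by
                rw [oChain_cons_cons]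
                refine ⟨Or.inr (Or.inl hKcu), ?_, hoc3⟩
                intro r hr
                rw [← hcongrA r]
                exact htr2 r hr
              have htrans : ∀ w, oChain K D (w :: u :: B :: c :: rest') →
                  oChain K D (w :: u :: c :: rest') := by
                intro w hw
                rw [oChain_cons_cons] at hw ⊢
                refine ⟨hw.1, ?_, hmid⟩
                intro r hr
                rw [List.head?_cons, Option.some.injEq] at hr
                subst hr
                rw [triplex_congrC K (iff_of_true hKcu hKBu) (iff_of_false hUuc hUuB)]
                exact hw.2.1 B rfl
              obtain ⟨l', h1, h2, h3, h4, h5⟩ := ihn (u :: c :: rest')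
                (by
                  simp only [List.length] at hlen ⊢
                  rw [cntB_cons_ne _ _ _ hu, cntB_cons_self, cntB_cons_ne _ _ _ hcne] at hlen
                  rw [cntB_cons_ne _ _ _ hu, cntB_cons_ne _ _ _ hcne]
                  omega)
                hmid (by simpa using hu) (by
                  rw [List.getLast?_cons_cons]; exact htl')
              refine ⟨l', h1, h2, by rw [h3]; simp, ?_, fun w hw => h5 w (htrans w hw)⟩
              rw [h4, List.getLast?_cons_cons, hlast]
      · -- v ≠ B : keep the head and recurse
        rw [oChain_cons_cons] at hoc
        obtain ⟨hadj, htr, hrest⟩ := hoc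
        obtain ⟨l'', h1, h2, h3, h4, h5⟩ := ihn (v :: rest)
          (by
            simp only [List.length] at hlen ⊢
            rw [cntB_cons_ne _ _ _ hu] at hlen
            omega)
          hrest (by simpa using hvB)
          (by rw [List.getLast?_cons_cons] at htl; exact htl)
        obtain ⟨t, rfl⟩ : ∃ t, l'' = v :: t := by
          cases l'' with
          | nil => simp at h3
          | cons v' t =>
            rw [List.head?_cons, List.head?_cons, Option.some.injEq] at h3
            exact ⟨t, by rw [h3]⟩
        have hnew : oChain K D (u :: v :: t) := by
          refine h5 u ?_
          rw [oChain_cons_cons]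
          exact ⟨hadj, htr, hrest⟩
        refine ⟨u :: v :: t, hnew, ?_, rfl, ?_, ?_⟩
        · intro hmem
          rcases List.mem_cons.mp hmem with h | h
          · exact hu h.symm
          · exact h2 h
        · rw [List.getLast?_cons_cons, List.getLast?_cons_cons]
          exact h4
        · intro w hw
          rw [oChain_cons_cons] at hw ⊢
          refine ⟨hw.1, ?_, hnew⟩
          intro r hr
          rw [List.head?_cons, Option.some.injEq] at hr
          subst hr
          exact hw.2.1 v rfl

end Elim

section Step
variable {α : Type*} {H : MixedGraph (α ⊕ α)} {b : α} {D : Set (α ⊕ α)}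

lemma adj_symm (G : MixedGraph (α ⊕ α)) {u v : α ⊕ α} (h : G.adj u v) : G.adj v u := by
  rcases h with h | h | h
  · exact Or.inr (Or.inl h)
  · exact Or.inl h
  · exact Or.inr (Or.inr (G.undir_symm _ _ h))

lemma Kdir_eq_of_adj (hI : Inv0 H) {u v : α ⊕ α} (h : H.adj u v) :
    (Kg H (Sum.inl b)).dir u v ↔ H.dir u v := by
  rw [Kdir_iff]
  constructor
  · rintro (h' | ⟨-, -, h1, h2⟩)
    · exact h'
    · rcases h with h | h | h
      · exact h
      · exact absurd h (hI.no3 h1 h2)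
      · exact absurd h2 (hI.undir_no_dir_right h)
  · exact Or.inl

lemma Kadj_of_adj {u v : α ⊕ α} (h : H.adj u v) : (Kg H (Sum.inl b)).adj u v := by
  rcases h with h | h | h
  · exact Or.inl (Or.inl h)
  · exact Or.inr (Or.inl (Or.inl h))
  · exact Or.inr (Or.inr h)

lemma triplex_H_iff_K (hI : Inv0 H) {A M C : α ⊕ α} (h1 : H.adj A M) (h2 : H.adj M C) :
    H.triplex A M C ↔ (Kg H (Sum.inl b)).triplex A M C := by
  unfold MixedGraph.triplex
  rw [Kdir_eq_of_adj hI h1, Kdir_eq_of_adj hI (adj_symm H h2), Kundir_iff, Kundir_iff]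

lemma oChain_H_iff_K (hI : Inv0 H) :
    ∀ l : List (α ⊕ α), l.Chain' H.adj →
      (oChain H D l ↔ oChain (Kg H (Sum.inl b)) D l)
  | [] , _ => by simp
  | [a], _ => by simp
  | a :: c :: rest, hch => by
    rw [chain'_cons'] at hch
    obtain ⟨hab, hch⟩ := hch
    rw [oChain_cons_cons, oChain_cons_cons,
      ← oChain_H_iff_K hI (c :: rest) hch]
    constructor
    · rintro ⟨-, htr, hoc⟩
      refine ⟨Kadj_of_adj hab, ?_, hoc⟩
      intro r hr
      have hbc : H.adj c r := by
        cases rest with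
        | nil => simp at hr
        | cons r' t =>
          rw [List.head?_cons, Option.some.injEq] at hr
          subst hr
          exact (chain'_cons'.mp hch).1
      rw [← triplex_H_iff_K hI hab hbc]
      exact htr r hr
    · rintro ⟨-, htr, hoc⟩
      refine ⟨hab, ?_, hoc⟩
      intro r hr
      have hbc : H.adj c r := by
        cases rest with
        | nil => simp at hr
        | cons r' t =>
          rw [List.head?_cons, Option.some.injEq] at hr
          subst hr
          exact (chain'_cons'.mp hch).1
      rw [triplex_H_iff_K hI hab hbc]
      exact htr r hr

lemma Kdir_eq_marg {B u v : α ⊕ α} (hu : u ≠ B) (hv : v ≠ B) :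
    (Kg H B).dir u v ↔ (marg H B).dir u v := by
  rw [Kdir_iff, margDir_iff]
  constructor
  · rintro (h | ⟨-, -, h1, h2⟩)
    · exact ⟨hu, hv, Or.inl h⟩
    · exact ⟨hu, hv, Or.inr ⟨h1, h2⟩⟩
  · rintro ⟨-, -, h | ⟨h1, h2⟩⟩
    · exact Or.inl h
    · exact Or.inr ⟨hu, hv, h1, h2⟩

lemma Kundir_eq_marg {B u v : α ⊕ α} (hu : u ≠ B) (hv : v ≠ B) :
    (Kg H B).undir u v ↔ (marg H B).undir u v := by
  rw [Kundir_iff, margUndir_iff]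
  exact ⟨fun h => ⟨hu, hv, h⟩, fun h => h.2.2⟩

lemma Kadj_eq_marg {B u v : α ⊕ α} (hu : u ≠ B) (hv : v ≠ B) :
    (Kg H B).adj u v ↔ (marg H B).adj u v := by
  unfold MixedGraph.adj
  rw [Kdir_eq_marg hu hv, Kdir_eq_marg hv hu, Kundir_eq_marg hu hv]

lemma triplex_K_iff_marg {B A M C : α ⊕ α} (hA : A ≠ B) (hM : M ≠ B) (hC : C ≠ B) :
    (Kg H B).triplex A M C ↔ (marg H B).triplex A M C := by
  unfold MixedGraph.triplex
  rw [Kdir_eq_marg hA hM, Kdir_eq_marg hC hM, Kundir_eq_marg hA hM, Kundir_eq_marg hM hC]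

lemma oChain_K_iff_marg {B : α ⊕ α} :
    ∀ l : List (α ⊕ α), (∀ x ∈ l, x ≠ B) →
      (oChain (Kg H B) D l ↔ oChain (marg H B) D l)
  | [] , _ => by simp
  | [a], _ => by simp
  | a :: c :: rest, hne => by
    have ha : a ≠ B := hne a (by simp)
    have hc : c ≠ B := hne c (by simp)
    rw [oChain_cons_cons, oChain_cons_cons,
      ← oChain_K_iff_marg (c :: rest) (fun x hx => hne x (List.mem_cons_of_mem a hx)),
      Kadj_eq_marg ha hc]
    refine and_congr_right fun _ => and_congr_left fun _ => ?_
    refine forall_congr' fun r => ?_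
    refine imp_congr_right fun hr => ?_
    have hrne : r ≠ B := by
      cases rest with
      | nil => simp at hr
      | cons r' t =>
        rw [List.head?_cons, Option.some.injEq] at hr
        subst hr
        exact hne r' (by simp)
    rw [triplex_K_iff_marg ha hc hrne]

lemma margadj_ne {B u v : α ⊕ α} (h : (marg H B).adj u v) : u ≠ B ∧ v ≠ B := by
  rcases h with h | h | h
  · exact ⟨h.1, h.2.1⟩
  · exact ⟨h.2.1, h.1⟩
  · exact ⟨h.1, h.2.1⟩

lemma notB_of_marg_chain {B : α ⊕ α} :
    ∀ l : List (α ⊕ α), l.Chain' (marg H B).adj → l.head? ≠ some B →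
      ∀ x ∈ l, x ≠ B
  | [], _, _ => by simp
  | [a], _, hhd => by
    intro x hx
    rw [List.mem_singleton] at hx
    subst hx
    intro h
    exact hhd (by rw [h]; rfl)
  | a :: c :: rest, hch, hhd => by
    rw [chain'_cons'] at hch
    have hc : c ≠ B := (margadj_ne hch.1).2
    intro x hx
    rcases List.mem_cons.mp hx with rfl | hx
    · exact (margadj_ne hch.1).1
    · exact notB_of_marg_chain (c :: rest) hch.2 (by simp [hc]) x hx

lemma step_sep (hI : Inv0 H) (hBD : Sum.inl b ∉ D) (hpD : Sum.inr b ∉ D)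
    (X Y : Set (α ⊕ α)) (hX : ∀ x ∈ X, x ≠ Sum.inl b) (hY : ∀ y ∈ Y, y ≠ Sum.inl b) :
    H.AMPSepRoute D X Y ↔ (marg H (Sum.inl b)).AMPSepRoute D X Y := by
  rw [AMPSepRoute_iff, AMPSepRoute_iff]
  constructor
  · intro hsep l x y hx hy hh hl hoc
    have hch := oChain_chain' _ D l hoc
    have hne : ∀ z ∈ l, z ≠ Sum.inl b := by
      refine notB_of_marg_chain l hch ?_
      rw [hh]
      simp [hX x hx]
    have hKoc : oChain (Kg H (Sum.inl b)) D l := (oChain_K_iff_marg l hne).mpr hoc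
    obtain ⟨l', h1, hch', hh', hl', -⟩ := exp_lemma hI hBD l hKoc
    exact hsep l' x y hx hy (hh'.trans hh) (hl'.trans hl)
      ((oChain_H_iff_K hI l' hch').mpr h1)
  · intro hsep l x y hx hy hh hl hoc
    have hch := oChain_chain' H D l hoc
    have hK : oChain (Kg H (Sum.inl b)) D l := (oChain_H_iff_K hI l hch).mp hoc
    obtain ⟨l', h1, h2, h3, h4, -⟩ := elim_lemma hI hBD hpD
      (l.length + cntB (Sum.inl b) l) l le_rfl hK
      (by rw [hh]; simp [hX x hx]) (by rw [hl]; simp [hY y hy])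
    have hne' : ∀ z ∈ l', z ≠ Sum.inl b := fun z hz h => h2 (h ▸ hz)
    exact hsep l' x y hx hy (h3.trans hh) (h4.trans hl)
      ((oChain_K_iff_marg l' hne').mp h1)

end Step

end Alpha
section Invariants
variable {α : Type*}

lemma margDir_transGen {H : MixedGraph (α ⊕ α)} {B u v : α ⊕ α}
    (h : (marg H B).dir u v) : Relation.TransGen H.dir u v := by
  obtain ⟨-, -, h | ⟨h1, h2⟩⟩ := h
  · exact Relation.TransGen.single h
  · exact (Relation.TransGen.single h1).tail h2

lemma transGen_marg_mono {H : MixedGraph (α ⊕ α)} {B u v : α ⊕ α}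
    (h : Relation.TransGen (marg H B).dir u v) : Relation.TransGen H.dir u v := by
  induction h with
  | single h => exact margDir_transGen h
  | tail _ h ih => exact ih.trans (margDir_transGen h)

lemma inv_marg {H : MixedGraph (α ⊕ α)} (hI : Inv0 H) (m : α) :
    Inv0 (marg H (Sum.inl m)) := by
  refine ⟨?_, ?_, fun u h => hI.2.2.1 u (transGen_marg_mono h), ?_⟩
  · intro u v h
    exact hI.1 u v h.2.2
  · rintro u x ⟨-, -, h | ⟨-, h⟩⟩ <;> exact hI.noInr h
  · intro a
    rcases hI.2.2.2 a with hdir | hiso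
    · by_cases ham : a = m
      · subst ham
        refine Or.inr fun u hadj => ?_
        rcases hadj with h | h | h
        · exact h.2.1 rfl
        · exact h.1 rfl
        · exact h.2.1 rfl
      · refine Or.inl ⟨by simp, by simp [ham], Or.inl hdir⟩
    · refine Or.inr fun u hadj => ?_
      rcases hadj with ⟨-, -, h | ⟨h1, h2⟩⟩ | ⟨-, -, h | ⟨h1, h2⟩⟩ | ⟨-, -, h⟩
      · exact hiso u (Or.inl h)
      · exact hiso _ (Or.inl h2)
      · exact hiso u (Or.inr (Or.inl h))
      · exact hiso _ (Or.inr (Or.inl h1))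
      · exact hiso u (Or.inr (Or.inr h))

lemma eampDir_inl {G : MixedGraph α} :
    ∀ {u v : α ⊕ α}, Relation.TransGen (eamp G).dir u v →
      ∃ c, v = Sum.inl c ∧ ∀ a, u = Sum.inl a → Relation.TransGen G.dir a c := by
  intro u v h
  induction h with
  | single h =>
    rename_i w
    match u, w, h with
    | Sum.inl a, Sum.inl c, h =>
      exact ⟨c, rfl, fun a' ha' => Relation.TransGen.single (by cases ha'; exact h)⟩
    | Sum.inr x, Sum.inl c, h => exact ⟨c, rfl, fun a' ha' => by simp at ha'⟩
    | Sum.inl a, Sum.inr y, h => exact False.elim h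
    | Sum.inr x, Sum.inr y, h => exact False.elim h
  | tail hT h ih =>
    obtain ⟨c, rfl, hcl⟩ := ih
    rename_i w
    match w, h with
    | Sum.inl c', (h : G.dir c c') =>
      exact ⟨c', rfl, fun a ha => (hcl a ha).tail h⟩
    | Sum.inr y, h => exact False.elim h

lemma cycle_of_transGen {G : MixedGraph α} {a : α}
    (h : Relation.TransGen G.dir a a) : G.HasSemidirectedCycle := by
  obtain ⟨d, had, hda⟩ := Relation.TransGen.head'_iff.mp h
  obtain ⟨l, hch, hlast⟩ := List.exists_isChain_cons_of_relationReflTransGen hda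
  set L : List α := a :: d :: l with hL
  have hLlen : L.length = l.length + 2 := by simp [hL]
  have hch' : List.Chain' G.dir L := chain'_cons'.mpr ⟨had, hch⟩
  have hgetlast : L.getD (l.length + 1) a = a := by
    rw [List.getD_eq_getElem (l := L) (d := a) (by omega)]
    show (d :: l).get ⟨l.length, by simp⟩ = a
    rw [List.getLast_eq_getElem] at hlast
    convert hlast using 2
    simp
  refine ⟨l.length, fun i => L.getD i.1 a, ?_, ?_, ?_⟩
  · show L.getD (0 : Fin (l.length + 2)).1 a = L.getD (Fin.last (l.length + 1)).1 a
    rw [Fin.val_zero, Fin.val_last, hgetlast]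
    rfl
  · show G.dir (L.getD (0 : Fin (l.length + 2)).1 a) (L.getD (1 : Fin (l.length + 2)).1 a)
    rw [Fin.val_zero, Fin.val_one]
    exact had
  · intro i
    left
    show G.dir (L.getD i.castSucc.1 a) (L.getD i.succ.1 a)
    rw [Fin.coe_castSucc, Fin.val_succ]
    have hi : i.1 + 1 < L.length := by rw [hLlen]; omega
    rw [List.getD_eq_getElem (l := L) (d := a) (by omega), List.getD_eq_getElem (l := L) (d := a) hi]
    exact List.isChain_iff_getElem.mp hch' i.1 hi

lemma inv_eamp {G : MixedGraph α} (hG : G.IsChainGraph) : Inv0 (eamp G) := by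
  refine ⟨?_, ?_, ?_, ?_⟩
  · rintro (x | x) (y | y) h
    · exact False.elim h
    · exact False.elim h
    · exact False.elim h
    · exact ⟨⟨x, rfl⟩, ⟨y, rfl⟩⟩
  · rintro (u | u) x h <;> exact h
  · intro u h
    obtain ⟨c, hc, hcl⟩ := eampDir_inl h
    subst hc
    exact hG.2 (cycle_of_transGen (hcl c rfl))
  · intro a
    exact Or.inl rfl

lemma margList_nil {β : Type*} (H : MixedGraph β) : margList H [] = H := rfl

lemma margList_cons {β : Type*} (H : MixedGraph β) (a : β) (t : List β) :
    margList H (a :: t) = margList (marg H a) t := rfl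

lemma det_char {G : MixedGraph α} {Z : Set (α ⊕ α)}
    (hZ : ∀ v ∈ Z, ∃ a, v = Sum.inl a) :
    ∀ v, MixedGraph.Determined (eampDet G) Z v →
      (∃ a, v = Sum.inl a ∧ v ∈ Z) ∨ (∃ a, v = Sum.inr a ∧ Sum.inl a ∈ Z) := by
  intro v h
  induction h with
  | base a ha =>
    obtain ⟨x, rfl⟩ := hZ a ha
    exact Or.inl ⟨x, rfl, ha⟩
  | step S a hmem hall ih =>
    rcases hmem with ⟨A, hA⟩ | ⟨A, hA⟩
    · rw [Prod.mk.injEq] at hA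
      obtain ⟨hS, rfl⟩ := hA
      have hin : Sum.inr A ∈ S := by rw [hS]; exact Or.inr rfl
      rcases ih (Sum.inr A) hin with ⟨x, hx, -⟩ | ⟨x, hx, hxZ⟩
      · simp at hx
      · rw [Sum.inr.injEq] at hx
        subst hx
        exact Or.inl ⟨A, rfl, hxZ⟩
    · rw [Prod.mk.injEq] at hA
      obtain ⟨hS, rfl⟩ := hA
      have hin : Sum.inl A ∈ S := by rw [hS]; exact Or.inr rfl
      rcases ih (Sum.inl A) hin with ⟨x, hx, hxZ⟩ | ⟨x, hx, -⟩
      · rw [Sum.inl.injEq] at hx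
        subst hx
        exact Or.inr ⟨A, rfl, hxZ⟩
      · simp at hx

lemma inv_margList {H : MixedGraph (α ⊕ α)} (hI : Inv0 H) :
    ∀ M : List α, Inv0 (margList H (M.map Sum.inl))
  | [] => hI
  | m :: t => by
    rw [List.map_cons, margList_cons]
    exact inv_margList (inv_marg hI m) t

lemma main_ind {D X Y : Set (α ⊕ α)} :
    ∀ (L : List α) (H : MixedGraph (α ⊕ α)), Inv0 H →
      (∀ c ∈ L, Sum.inl c ∉ D ∧ Sum.inr c ∉ D) →
      (∀ x ∈ X, ∀ c ∈ L, x ≠ Sum.inl c) →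
      (∀ y ∈ Y, ∀ c ∈ L, y ≠ Sum.inl c) →
      (H.AMPSepRoute D X Y ↔ (margList H (L.map Sum.inl)).AMPSepRoute D X Y)
  | [], H, _, _, _, _ => Iff.rfl
  | c :: t, H, hI, hD, hX, hY => by
    rw [List.map_cons, margList_cons]
    rw [step_sep hI (hD c (by simp)).1 (hD c (by simp)).2 X Y
      (fun x hx => hX x hx c (by simp)) (fun y hy => hY y hy c (by simp))]
    exact main_ind t (marg H (Sum.inl c)) (inv_marg hI c)
      (fun c' hc' => hD c' (List.mem_cons_of_mem c hc'))
      (fun x hx c' hc' => hX x hx c' (List.mem_cons_of_mem c hc'))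
      (fun y hy c' hc' => hY y hy c' (List.mem_cons_of_mem c hc'))

end Invariants

end ProofAux


/-- Theorem 4: `[I_AMP(G')]_{L ∪ ε} = [I_AMP([G']_L)]_ε`: for an
EAMP CG G' (obtained from an AMP CG G by the error-node construction followed by
marginalizing the nodes of M) and `L ⊆ W`, AMP separation (route-based, with the
deterministic relationships of G') among disjoint `X, Y, Z ⊆ W \ L` is the same
in G' and in `[G']_L`. -/
theorem stmt13 {α : Type*} (G : MixedGraph α) (hG : G.IsChainGraph)
    (M L : List α) (hML : ∀ a ∈ L, a ∉ M)
    (X Y Z : Set (α ⊕ α))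
    (hX : X ⊆ {v | ∃ a, v = Sum.inl a ∧ a ∉ M ∧ a ∉ L})
    (hY : Y ⊆ {v | ∃ a, v = Sum.inl a ∧ a ∉ M ∧ a ∉ L})
    (hZ : Z ⊆ {v | ∃ a, v = Sum.inl a ∧ a ∉ M ∧ a ∉ L})
    (hXY : Disjoint X Y) (hXZ : Disjoint X Z) (hYZ : Disjoint Y Z) :
    (margList (eamp G) (M.map Sum.inl)).AMPSepRoute
        (MixedGraph.DSet (eampDet G) Z) X Y ↔
      (margList (margList (eamp G) (M.map Sum.inl)) (L.map Sum.inl)).AMPSepRoute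
        (MixedGraph.DSet (eampDet G) Z) X Y := by
  classical
  have hZ' : ∀ v ∈ Z, ∃ a, v = Sum.inl a := by
    intro v hv
    obtain ⟨a, ha, -⟩ := hZ hv
    exact ⟨a, ha⟩
  have hDchar := det_char (G := G) hZ'
  have hinv : Inv0 (margList (eamp G) (M.map Sum.inl)) :=
    inv_margList (inv_eamp hG) M
  refine main_ind L _ hinv ?_ ?_ ?_
  · intro c hc
    constructor
    · intro hmem
      rcases hDchar _ hmem with ⟨a, ha, hZa⟩ | ⟨a, ha, -⟩
      · rw [Sum.inl.injEq] at ha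
        subst ha
        obtain ⟨a', ha', -, hL'⟩ := hZ hZa
        rw [Sum.inl.injEq] at ha'
        subst ha'
        exact hL' hc
      · simp at ha
    · intro hmem
      rcases hDchar _ hmem with ⟨a, ha, -⟩ | ⟨a, ha, hZa⟩
      · simp at ha
      · rw [Sum.inr.injEq] at ha
        subst ha
        obtain ⟨a', ha', -, hL'⟩ := hZ hZa
        rw [Sum.inl.injEq] at ha'
        subst ha'
        exact hL' hc
  · intro x hx c hc
    obtain ⟨a, rfl, -, hL'⟩ := hX hx
    intro h
    rw [Sum.inl.injEq] at h
    subst h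
    exact hL' hc
  · intro y hy c hc
    obtain ⟨a, rfl, -, hL'⟩ := hY hy
    intro h
    rw [Sum.inl.injEq] at h
    subst h
    exact hL' hc
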